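/- Let G = (V, E) be a d-regular λ-spectral expander on n vertices, let S ⊆ E be a nonempty set of edges, and let U be the set of vertices incident to some edge of S. If at least a γ-fraction of the vertices of U are each incident to at least δd edges of S, then |S| ≥ γδ(γδ − λ/d)|E|. -/

import Mathlib

open Finset

set_option maxHeartbeats 1600000 in
/-- Fractional version: if `S` is a nonempty set of edges of a `d`-regular `lam`-spectral expander
(encoded via the expander mixing lemma bound), `U` the set of vertices touched by `S`, and at least
a `γ`-fraction of the vertices of `U` are incident to at least `δd` edges of `S`, then
`|S| ≥ γδ(γδ - lam/d)|E|`. -/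
theorem stmt4 {V : Type*} [Fintype V] (G : SimpleGraph V) [DecidableRel G.Adj]
    (d : ℕ) (hreg : G.IsRegularOfDegree d) (lam γ δ : ℝ)
    (hγ0 : 0 < γ) (hγ1 : γ ≤ 1) (hδ0 : 0 < δ) (hδ1 : δ ≤ 1)
    (hEML : ∀ U : Set V,
      (({p : V × V | p.1 ∈ U ∧ p.2 ∈ U ∧ G.Adj p.1 p.2}).ncard : ℝ)
        ≤ (d / Fintype.card V) * U.ncard ^ 2 + lam * U.ncard)
    (S : Set (Sym2 V)) (hSE : S ⊆ G.edgeSet) (hS : S.Nonempty)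
    (U : Set V) (hU : U = {v : V | ∃ e ∈ S, v ∈ e})
    (hfrac : γ * U.ncard ≤
      (({v ∈ U | δ * d ≤ (({e ∈ S | v ∈ e}).ncard : ℝ)}).ncard : ℝ)) :
    γ * δ * (γ * δ - lam / d) * G.edgeSet.ncard ≤ (S.ncard : ℝ) := by
  classical
  set n : ℕ := Fintype.card V with hn
  have hSfin : S.Finite := Set.toFinite S
  set Sf : Finset (Sym2 V) := hSfin.toFinset with hSfdef
  have hmemSf : ∀ e, e ∈ Sf ↔ e ∈ S := fun e => hSfin.mem_toFinset
  -- degrees within S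
  set deg : V → ℕ := fun v => (Sf.filter (fun e => v ∈ e)).card with hdegdef
  have hdeg_eq : ∀ v : V, ({e ∈ S | v ∈ e}).ncard = deg v := by
    intro v
    have : {e ∈ S | v ∈ e} = ↑(Sf.filter (fun e => v ∈ e)) := by
      ext e; simp [hmemSf]
    rw [this, Set.ncard_coe_finset]
  -- every edge of S has exactly two endpoints
  have htwo : ∀ e ∈ Sf, (univ.filter (fun v => v ∈ e)).card = 2 := by
    intro e he
    revert he
    induction e using Sym2.ind with
    | _ a b =>
      intro he
      have hadj : G.Adj a b := (SimpleGraph.mem_edgeSet G).1 (hSE ((hmemSf _).1 he))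
      have hne : a ≠ b := hadj.ne
      have : univ.filter (fun v => v ∈ (s(a, b) : Sym2 V)) = {a, b} := by
        ext v; simp [Sym2.mem_iff]
      rw [this, Finset.card_pair hne]
  -- double counting: sum of degrees = 2 |S|
  have hsumdeg : ∑ v : V, deg v = 2 * Sf.card := by
    calc ∑ v : V, deg v
        = ∑ v : V, ∑ e ∈ Sf, if v ∈ e then 1 else 0 := by
          refine Finset.sum_congr rfl fun v _ => ?_
          rw [hdegdef]
          exact Finset.card_filter _ _
      _ = ∑ e ∈ Sf, ∑ v : V, if v ∈ e then 1 else 0 := Finset.sum_comm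
      _ = ∑ e ∈ Sf, (univ.filter (fun v => v ∈ e)).card := by
          refine Finset.sum_congr rfl fun e _ => ?_
          exact (Finset.card_filter _ _).symm
      _ = ∑ e ∈ Sf, 2 := Finset.sum_congr rfl htwo
      _ = 2 * Sf.card := by rw [Finset.sum_const, smul_eq_mul, mul_comm]
  -- ordered pairs from S
  set Pf : Finset (V × V) := univ.filter (fun p => s(p.1, p.2) ∈ Sf) with hPfdef
  have hPfcard : Pf.card = 2 * Sf.card := by
    have hmaps : ∀ p ∈ Pf, s(p.1, p.2) ∈ Sf := by
      intro p hp; simpa [hPfdef] using hp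
    rw [Finset.card_eq_sum_card_fiberwise hmaps]
    have hfib : ∀ e ∈ Sf, (Pf.filter (fun p => s(p.1, p.2) = e)).card = 2 := by
      intro e he
      revert he
      induction e using Sym2.ind with
      | _ a b =>
        intro he
        have hadj : G.Adj a b := (SimpleGraph.mem_edgeSet G).1 (hSE ((hmemSf _).1 he))
        have hne : a ≠ b := hadj.ne
        have hset : Pf.filter (fun p => s(p.1, p.2) = (s(a, b) : Sym2 V))
            = {(a, b), (b, a)} := by
          ext ⟨x, y⟩
          simp only [hPfdef, Finset.mem_filter, Finset.mem_univ, true_and,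
            Finset.mem_insert, Finset.mem_singleton, Prod.mk.injEq]
          constructor
          · rintro ⟨-, h⟩
            rcases Sym2.eq_iff.1 h with ⟨rfl, rfl⟩ | ⟨rfl, rfl⟩
            · exact Or.inl ⟨rfl, rfl⟩
            · exact Or.inr ⟨rfl, rfl⟩
          · rintro (⟨rfl, rfl⟩ | ⟨rfl, rfl⟩)
            · exact ⟨he, rfl⟩
            · exact ⟨by rwa [Sym2.eq_swap], Sym2.eq_swap⟩
        rw [hset, Finset.card_pair (by simp [hne])]
    rw [Finset.sum_congr rfl hfib, Finset.sum_const, smul_eq_mul, mul_comm]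
  -- pairs from S sit inside the EML pair set
  have hpairs : (2 * Sf.card : ℝ)
      ≤ (({p : V × V | p.1 ∈ U ∧ p.2 ∈ U ∧ G.Adj p.1 p.2}).ncard : ℝ) := by
    have hsub : (↑Pf : Set (V × V)) ⊆ {p : V × V | p.1 ∈ U ∧ p.2 ∈ U ∧ G.Adj p.1 p.2} := by
      rintro ⟨x, y⟩ hp
      have hxy : s(x, y) ∈ S := by
        simpa [hPfdef, hmemSf] using hp
      have hadj : G.Adj x y := (SimpleGraph.mem_edgeSet G).1 (hSE hxy)
      refine ⟨?_, ?_, hadj⟩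
      · rw [hU]; exact ⟨s(x, y), hxy, Sym2.mem_mk_left x y⟩
      · rw [hU]; exact ⟨s(x, y), hxy, Sym2.mem_mk_right x y⟩
    have := Set.ncard_le_ncard hsub (Set.toFinite _)
    rw [Set.ncard_coe_finset, hPfcard] at this
    exact_mod_cast this
  -- EML bound
  have hEMLU := hEML U
  have hC : (2 * Sf.card : ℝ) ≤ ((d : ℝ) / n) * (U.ncard : ℝ) ^ 2 + lam * U.ncard :=
    le_trans hpairs hEMLU
  -- heavy vertices
  set W : Set V := {v ∈ U | δ * d ≤ (({e ∈ S | v ∈ e}).ncard : ℝ)} with hWdef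
  have hWfin : W.Finite := Set.toFinite W
  set Wf : Finset V := hWfin.toFinset with hWfdef
  have hWcard : W.ncard = Wf.card := Set.ncard_eq_toFinset_card W hWfin
  have hB : δ * d * Wf.card ≤ (2 * Sf.card : ℝ) := by
    have h1 : ∀ v ∈ Wf, δ * d ≤ (deg v : ℝ) := by
      intro v hv
      have hv' : v ∈ W := hWfin.mem_toFinset.1 hv
      have := hv'.2
      rwa [hdeg_eq v] at this
    calc δ * d * Wf.card = ∑ _v ∈ Wf, δ * d := by
          rw [Finset.sum_const, nsmul_eq_mul]; ring
      _ ≤ ∑ v ∈ Wf, (deg v : ℝ) := Finset.sum_le_sum h1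
      _ ≤ ∑ v : V, (deg v : ℝ) :=
          Finset.sum_le_sum_of_subset_of_nonneg (Finset.subset_univ _)
            (fun v _ _ => by positivity)
      _ = (2 * Sf.card : ℝ) := by exact_mod_cast congrArg Nat.cast hsumdeg
  -- nonemptiness / positivity facts
  obtain ⟨e, heS⟩ := hS
  have hkey : U.Nonempty ∧ 0 < d := by
    revert heS
    induction e using Sym2.ind with
    | _ a b =>
      intro heS
      have hadj : G.Adj a b := (SimpleGraph.mem_edgeSet G).1 (hSE heS)
      refine ⟨⟨a, by rw [hU]; exact ⟨s(a, b), heS, Sym2.mem_mk_left a b⟩⟩, ?_⟩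
      have hpos : 0 < G.degree a := (G.degree_pos_iff_exists_adj a).2 ⟨b, hadj⟩
      rwa [hreg a] at hpos
  obtain ⟨hUne, hd0⟩ := hkey
  have hn0 : 0 < n := Fintype.card_pos_iff.2 ⟨hUne.choose⟩
  have hu0 : 0 < (U.ncard : ℝ) := by
    have := Set.ncard_pos (Set.toFinite U) |>.2 hUne
    exact_mod_cast this
  -- |E| = d n / 2
  have hEcard : (G.edgeSet.ncard : ℝ) = (d : ℝ) * n / 2 := by
    have h1 : G.edgeSet.ncard = G.edgeFinset.card := by
      rw [Set.ncard_eq_toFinset_card']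
      congr 1
    have h2 : 2 * G.edgeFinset.card = n * d := by
      rw [← SimpleGraph.sum_degrees_eq_twice_card_edges]
      simp [hreg _, hn]
    have : (2 : ℝ) * G.edgeSet.ncard = (n : ℝ) * d := by
      rw [h1]; exact_mod_cast congrArg Nat.cast h2
    linarith
  -- set up real variables
  set s : ℝ := (Sf.card : ℝ) with hsdef
  set u : ℝ := (U.ncard : ℝ) with hudef
  have hSncard : (S.ncard : ℝ) = s := by
    rw [Set.ncard_eq_toFinset_card S hSfin]
  have hfrac' : γ * u ≤ (Wf.card : ℝ) := by
    rw [hudef]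
    calc γ * (U.ncard : ℝ) ≤ (W.ncard : ℝ) := hfrac
      _ = (Wf.card : ℝ) := by rw [hWcard]
  have hdR : (0 : ℝ) < d := by exact_mod_cast hd0
  have hnR : (0 : ℝ) < n := by exact_mod_cast hn0
  -- key1 : γ δ d u ≤ 2 s
  have key1 : γ * δ * d * u ≤ 2 * s := by
    have h := mul_le_mul_of_nonneg_left hfrac' (by positivity : (0:ℝ) ≤ δ * d)
    nlinarith [hB]
  -- key2 : γ δ d n ≤ d u + lam n
  have hC' : 2 * s * n ≤ (d : ℝ) * u ^ 2 + lam * u * n := by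
    have := mul_le_mul_of_nonneg_right hC (le_of_lt hnR)
    have hne : (n : ℝ) ≠ 0 := ne_of_gt hnR
    calc 2 * s * n ≤ ((d : ℝ) / n * u ^ 2 + lam * u) * n := this
      _ = (d : ℝ) * u ^ 2 + lam * u * n := by field_simp
  have hk1n := mul_le_mul_of_nonneg_right key1 (le_of_lt hnR)
  clear_value s u
  have key2 : γ * δ * d * n ≤ (d : ℝ) * u + lam * n := by
    nlinarith [hk1n, hC', hu0]
  -- finish
  rw [hSncard, hEcard]
  have hdne : (d : ℝ) ≠ 0 := ne_of_gt hdR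
  have hfin : γ * δ * (γ * δ - lam / d) * ((d : ℝ) * n / 2)
      = (γ * δ * (γ * δ * d * n) - γ * δ * (lam * n)) / 2 := by
    field_simp
  rw [hfin]
  have := mul_le_mul_of_nonneg_left key2 (by positivity : (0:ℝ) ≤ γ * δ)
  nlinarith [key1]
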